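/- For every ε with 0 < ε < 1 there exists a constant C > 0 such that for all Ξ ∈ ℝ³ and all real a ≥ 1: ∫_{ℝ³} (a·|ξ|^{-1} + 1) · (|Ξ−ξ|² + |ξ| + a)^{-2} dξ ≤ C · a^{ε}. -/

import Mathlib

open MeasureTheory Measure Set Metric Filter

/-- Auxiliary: radial integrability criterion for Haar measure. -/
lemma integrable_fun_norm_addHaar' {E : Type*} [NormedAddCommGroup E] [NormedSpace ℝ E]
    [MeasurableSpace E] [BorelSpace E] [FiniteDimensional ℝ E] [Nontrivial E]
    (μ : Measure E) [μ.IsAddHaarMeasure] {f : ℝ → ℝ}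
    (hf : IntegrableOn (fun y => y ^ (Module.finrank ℝ E - 1) * f y) (Ioi 0)) :
    Integrable (fun x => f ‖x‖) μ := by
  set n := Module.finrank ℝ E - 1 with hn
  have h1 : Integrable (fun y : Ioi (0:ℝ) => (y : ℝ) ^ n * f y)
      (Measure.comap Subtype.val volume) := by
    have h0 := ((MeasurableEmbedding.subtype_coe (measurableSet_Ioi (a := (0:ℝ)))).integrable_map_iff
      (g := fun y : ℝ => y ^ n * f y) (μ := Measure.comap Subtype.val volume))
    rw [map_comap_subtype_coe measurableSet_Ioi] at h0
    exact h0.mp hf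
  have h2 : Integrable (fun y : Ioi (0:ℝ) => f y) (Measure.volumeIoiPow n) := by
    rw [Measure.volumeIoiPow, integrable_withDensity_iff_integrable_smul'
      ((measurable_subtype_coe.pow_const n).ennreal_ofReal)
      (Eventually.of_forall fun y => ENNReal.ofReal_lt_top)]
    have hEq : (fun y : Ioi (0:ℝ) => (ENNReal.ofReal ((y:ℝ) ^ n)).toReal • f y)
        = fun y : Ioi (0:ℝ) => (y : ℝ) ^ n * f y := by
      funext y
      rw [ENNReal.toReal_ofReal (pow_nonneg y.2.le n), smul_eq_mul]
    rw [hEq]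
    exact h1
  have h3 : Integrable (fun z : sphere (0:E) 1 × Ioi (0:ℝ) => f z.2)
      (μ.toSphere.prod (Measure.volumeIoiPow n)) := by
    have := (integrable_const (c := (1:ℝ)) (μ := μ.toSphere)).smul_prod h2
    simpa using this
  have h4 : Integrable (fun x : ({0}ᶜ : Set E) => f ‖(x : E)‖) (μ.comap Subtype.val) := by
    simpa [Function.comp_def] using (μ.measurePreserving_homeomorphUnitSphereProd.integrable_comp_emb
      (Homeomorph.measurableEmbedding _) (g := fun z : sphere (0:E) 1 × Ioi (0:ℝ) => f z.2)).mpr h3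
  have h5 : Integrable (fun x : E => f ‖x‖) (μ.restrict ({0}ᶜ)) := by
    rw [← map_comap_subtype_coe (measurableSet_singleton (0:E)).compl,
      (MeasurableEmbedding.subtype_coe (measurableSet_singleton (0:E)).compl).integrable_map_iff]
    exact h4
  rwa [restrict_compl_singleton] at h5

/-- The radial profile. -/
noncomputable def myG (a r : ℝ) : ℝ := (a * r⁻¹ + 1) * ((r ^ 2 + r + a) ^ 2)⁻¹

lemma myG_nonneg {a : ℝ} (ha : 1 ≤ a) (r : ℝ) (hr : 0 ≤ r) : 0 ≤ myG a r := by
  have ha0 : (0:ℝ) < a := lt_of_lt_of_le one_pos ha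
  unfold myG
  have h1 : 0 ≤ a * r⁻¹ + 1 := by
    have : 0 ≤ a * r⁻¹ := mul_nonneg ha0.le (inv_nonneg.2 hr)
    linarith
  exact mul_nonneg h1 (inv_nonneg.2 (sq_nonneg _))

lemma oneD (a : ℝ) (ha : 1 ≤ a) :
    IntegrableOn (fun r : ℝ => r ^ 2 * myG a r) (Ioi 0)
    ∧ ∫ r in Ioi (0:ℝ), r ^ 2 * myG a r ≤ 5 / 2 := by
  have ha0 : (0:ℝ) < a := lt_of_lt_of_le one_pos ha
  set F : ℝ → ℝ := fun r => -(a / 2) * ((r ^ 2 + a)⁻¹) with hF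
  have hderiv : ∀ x ∈ Ici (0:ℝ), HasDerivAt F (a * x * (((x ^ 2 + a) ^ 2)⁻¹)) x := by
    intro x _
    have hxa : (0:ℝ) < x ^ 2 + a := by nlinarith [sq_nonneg x]
    have h1 : HasDerivAt (fun r : ℝ => r ^ 2 + a) (2 * x) x := by
      simpa using (hasDerivAt_pow 2 x).add_const a
    have h2 := (h1.inv hxa.ne').const_mul (-(a / 2))
    refine h2.congr_deriv ?_
    have hne : (x ^ 2 + a) ^ 2 ≠ 0 := by positivity
    ring
  have htend : Tendsto F atTop (nhds 0) := by
    have h1 : Tendsto (fun r : ℝ => r ^ 2 + a) atTop atTop :=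
      tendsto_atTop_add_const_right _ a (tendsto_pow_atTop two_ne_zero)
    have h2 := h1.inv_tendsto_atTop.const_mul (-(a / 2))
    rw [mul_zero] at h2
    simpa [hF, neg_mul] using h2
  have hpos : ∀ x ∈ Ioi (0:ℝ), 0 ≤ a * x * (((x ^ 2 + a) ^ 2)⁻¹) := by
    intro x hx
    have hx0 : (0:ℝ) < x := hx
    have hxa : (0:ℝ) < x ^ 2 + a := by nlinarith
    have := inv_nonneg.2 (le_of_lt (pow_pos hxa 2))
    exact mul_nonneg (mul_nonneg ha0.le hx0.le) this
  have hint1 : IntegrableOn (fun x : ℝ => a * x * (((x ^ 2 + a) ^ 2)⁻¹)) (Ioi 0) :=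
    integrableOn_Ioi_deriv_of_nonneg' (fun x hx => hderiv x hx) hpos htend
  have hval1 : ∫ x in Ioi (0:ℝ), a * x * (((x ^ 2 + a) ^ 2)⁻¹) = 1 / 2 := by
    rw [integral_Ioi_of_hasDerivAt_of_nonneg' (fun x hx => hderiv x hx) hpos htend, hF]
    simp only
    rw [show ((0:ℝ) ^ 2 + a) = a by ring]
    field_simp
    ring
  have hint2 : IntegrableOn (fun r : ℝ => (1 + r ^ 2)⁻¹) (Ioi 0) :=
    integrable_inv_one_add_sq.integrableOn
  have hval2 : ∫ r in Ioi (0:ℝ), (1 + r ^ 2)⁻¹ = Real.pi / 2 := by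
    rw [integral_Ioi_inv_one_add_sq, Real.arctan_zero, sub_zero]
  have hmaj : IntegrableOn
      (fun r : ℝ => a * r * (((r ^ 2 + a) ^ 2)⁻¹) + (1 + r ^ 2)⁻¹) (Ioi 0) := hint1.add hint2
  have hpt : ∀ r ∈ Ioi (0:ℝ),
      r ^ 2 * myG a r ≤ a * r * (((r ^ 2 + a) ^ 2)⁻¹) + (1 + r ^ 2)⁻¹ := by
    intro r hr
    have hr0 : (0:ℝ) < r := hr
    have hA : (0:ℝ) < r ^ 2 + a := by nlinarith
    have hB : (0:ℝ) < r ^ 2 + r + a := by nlinarith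
    have hC : (0:ℝ) < 1 + r ^ 2 := by nlinarith
    have e1 : r ^ 2 * myG a r
        = a * r * (((r ^ 2 + r + a) ^ 2)⁻¹) + r ^ 2 * (((r ^ 2 + r + a) ^ 2)⁻¹) := by
      unfold myG
      field_simp
    rw [e1]
    have t1 : a * r * (((r ^ 2 + r + a) ^ 2)⁻¹) ≤ a * r * (((r ^ 2 + a) ^ 2)⁻¹) := by
      have h2 : (r ^ 2 + a) ^ 2 ≤ (r ^ 2 + r + a) ^ 2 := by nlinarith
      have := inv_anti₀ (pow_pos hA 2) h2
      exact mul_le_mul_of_nonneg_left this (mul_nonneg ha0.le hr0.le)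
    have t2 : r ^ 2 * (((r ^ 2 + r + a) ^ 2)⁻¹) ≤ (1 + r ^ 2)⁻¹ := by
      rw [← div_eq_mul_inv, inv_eq_one_div, div_le_div_iff₀ (pow_pos hB 2) hC]
      nlinarith
    linarith
  have hmeas : Measurable (fun r : ℝ => r ^ 2 * myG a r) := by
    unfold myG; fun_prop
  have hnn : ∀ r ∈ Ioi (0:ℝ), 0 ≤ r ^ 2 * myG a r := fun r hr =>
    mul_nonneg (sq_nonneg r) (myG_nonneg ha r (le_of_lt hr))
  have hintmain : IntegrableOn (fun r : ℝ => r ^ 2 * myG a r) (Ioi 0) := by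
    refine hmaj.mono' hmeas.aestronglyMeasurable ?_
    rw [ae_restrict_iff' measurableSet_Ioi]
    exact Eventually.of_forall fun r hr => by
      rw [Real.norm_eq_abs, abs_of_nonneg (hnn r hr)]; exact hpt r hr
  refine ⟨hintmain, ?_⟩
  have := setIntegral_mono_on hintmain hmaj measurableSet_Ioi hpt
  rw [integral_add hint1 hint2, hval1, hval2] at this
  have hπ : Real.pi ≤ 4 := Real.pi_le_four
  linarith

lemma ptbound {E : Type*} [NormedAddCommGroup E] {a : ℝ} (ha : 1 ≤ a) (Ξ ξ : E) (hξ : ξ ≠ Ξ) :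
    (a * ‖ξ‖⁻¹ + 1) * ((‖Ξ - ξ‖ ^ 2 + ‖ξ‖ + a) ^ 2)⁻¹ ≤ myG a ‖ξ‖ + myG a ‖Ξ - ξ‖ := by
  have ha0 : (0:ℝ) < a := lt_of_lt_of_le one_pos ha
  have hfac : 0 ≤ a * ‖ξ‖⁻¹ + 1 := by
    have : 0 ≤ a * ‖ξ‖⁻¹ := mul_nonneg ha0.le (inv_nonneg.2 (norm_nonneg _))
    linarith
  rcases le_total ‖ξ‖ ‖Ξ - ξ‖ with h | h
  · have hd : (‖ξ‖ ^ 2 + ‖ξ‖ + a) ^ 2 ≤ (‖Ξ - ξ‖ ^ 2 + ‖ξ‖ + a) ^ 2 := by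
      have hx2 : ‖ξ‖ ^ 2 ≤ ‖Ξ - ξ‖ ^ 2 := pow_le_pow_left₀ (norm_nonneg ξ) h 2
      have hA0 : (0:ℝ) ≤ ‖ξ‖ ^ 2 + ‖ξ‖ + a := by nlinarith [norm_nonneg ξ, sq_nonneg ‖ξ‖]
      exact pow_le_pow_left₀ hA0 (by linarith) 2
    have hp : (0:ℝ) < (‖ξ‖ ^ 2 + ‖ξ‖ + a) ^ 2 := by
      have : (0:ℝ) < ‖ξ‖ ^ 2 + ‖ξ‖ + a := by nlinarith [norm_nonneg ξ, sq_nonneg ‖ξ‖]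
      positivity
    have hinv := inv_anti₀ hp hd
    have : (a * ‖ξ‖⁻¹ + 1) * ((‖Ξ - ξ‖ ^ 2 + ‖ξ‖ + a) ^ 2)⁻¹ ≤ myG a ‖ξ‖ :=
      mul_le_mul_of_nonneg_left hinv hfac
    have h2 := myG_nonneg ha ‖Ξ - ξ‖ (norm_nonneg _)
    linarith
  · have hne : (0:ℝ) < ‖Ξ - ξ‖ := by
      rw [norm_pos_iff, sub_ne_zero]
      exact fun hc => hξ hc.symm
    have hξ0 : (0:ℝ) < ‖ξ‖ := lt_of_lt_of_le hne h
    have t1 : a * ‖ξ‖⁻¹ + 1 ≤ a * ‖Ξ - ξ‖⁻¹ + 1 := by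
      have := inv_anti₀ hne h
      have := mul_le_mul_of_nonneg_left this ha0.le
      linarith
    have hp : (0:ℝ) < (‖Ξ - ξ‖ ^ 2 + ‖Ξ - ξ‖ + a) ^ 2 := by
      have : (0:ℝ) < ‖Ξ - ξ‖ ^ 2 + ‖Ξ - ξ‖ + a := by nlinarith [sq_nonneg ‖Ξ - ξ‖]
      positivity
    have hd : (‖Ξ - ξ‖ ^ 2 + ‖Ξ - ξ‖ + a) ^ 2 ≤ (‖Ξ - ξ‖ ^ 2 + ‖ξ‖ + a) ^ 2 := by
      have hA0 : (0:ℝ) ≤ ‖Ξ - ξ‖ ^ 2 + ‖Ξ - ξ‖ + a := by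
        nlinarith [norm_nonneg (Ξ - ξ), sq_nonneg ‖Ξ - ξ‖]
      exact pow_le_pow_left₀ hA0 (by linarith) 2
    have t2 := inv_anti₀ hp hd
    have hmul : (a * ‖ξ‖⁻¹ + 1) * ((‖Ξ - ξ‖ ^ 2 + ‖ξ‖ + a) ^ 2)⁻¹ ≤ myG a ‖Ξ - ξ‖ := by
      unfold myG
      apply mul_le_mul t1 t2 (inv_nonneg.2 (sq_nonneg _))
      have : 0 ≤ a * ‖Ξ - ξ‖⁻¹ := mul_nonneg ha0.le (inv_nonneg.2 (norm_nonneg _))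
      linarith
    have h2 := myG_nonneg ha ‖ξ‖ (norm_nonneg _)
    linarith

/-- For `0 < ε < 1` there is `C > 0` such that for all `Ξ ∈ ℝ³` and `a ≥ 1`:
`∫ (a |ξ|⁻¹ + 1) (|Ξ-ξ|² + |ξ| + a)⁻² dξ ≤ C a^ε`. -/
theorem stmt_9 (ε : ℝ) (hε : 0 < ε) (hε1 : ε < 1) :
    ∃ C > 0, ∀ (Ξ : EuclideanSpace ℝ (Fin 3)) (a : ℝ), 1 ≤ a →
      (∫ ξ : EuclideanSpace ℝ (Fin 3),
          (a * ‖ξ‖⁻¹ + 1) * ((‖Ξ - ξ‖ ^ 2 + ‖ξ‖ + a) ^ 2)⁻¹) ≤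
        C * a ^ ε := by
  set V : ℝ := (volume (ball (0 : EuclideanSpace ℝ (Fin 3)) 1)).toReal with hV
  have hV0 : 0 ≤ V := ENNReal.toReal_nonneg
  refine ⟨15 * V + 1, by positivity, ?_⟩
  intro Ξ a ha
  have ha0 : (0:ℝ) < a := lt_of_lt_of_le one_pos ha
  obtain ⟨hint1d, hval1d⟩ := oneD a ha
  have hint1d' : IntegrableOn
      (fun y : ℝ => y ^ (Module.finrank ℝ (EuclideanSpace ℝ (Fin 3)) - 1) * myG a y) (Ioi 0) := by
    simpa [finrank_euclideanSpace_fin] using hint1d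
  have hgint : Integrable (fun x : EuclideanSpace ℝ (Fin 3) => myG a ‖x‖) volume :=
    integrable_fun_norm_addHaar' volume hint1d'
  have hgval : ∫ x : EuclideanSpace ℝ (Fin 3), myG a ‖x‖ ≤ 15 * V / 2 := by
    rw [integral_fun_norm_addHaar volume (myG a), finrank_euclideanSpace_fin]
    simp only [smul_eq_mul, nsmul_eq_mul, Nat.cast_ofNat]
    have hI : (∫ y in Ioi (0:ℝ), y ^ (3 - 1) * myG a y) ≤ 5 / 2 := by
      norm_num
      exact hval1d
    have h2 := mul_le_mul_of_nonneg_left hI hV0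
    have hVr : volume.real (ball (0 : EuclideanSpace ℝ (Fin 3)) 1) = V := rfl
    rw [hVr]
    nlinarith [h2]
  have hΞint : Integrable (fun ξ : EuclideanSpace ℝ (Fin 3) => myG a ‖Ξ - ξ‖) volume :=
    (integrable_comp_sub_left (fun x : EuclideanSpace ℝ (Fin 3) => myG a ‖x‖) Ξ).mpr hgint
  have hsum : Integrable
      (fun ξ : EuclideanSpace ℝ (Fin 3) => myG a ‖ξ‖ + myG a ‖Ξ - ξ‖) volume := hgint.add hΞint
  have hne : ∀ᵐ ξ : EuclideanSpace ℝ (Fin 3), ξ ≠ Ξ := by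
    rw [ae_iff]
    simp only [ne_eq, not_not, setOf_eq_eq_singleton]
    exact measure_singleton Ξ
  have hae : ∀ᵐ ξ : EuclideanSpace ℝ (Fin 3),
      (a * ‖ξ‖⁻¹ + 1) * ((‖Ξ - ξ‖ ^ 2 + ‖ξ‖ + a) ^ 2)⁻¹ ≤ myG a ‖ξ‖ + myG a ‖Ξ - ξ‖ := by
    filter_upwards [hne] with ξ h using ptbound ha Ξ ξ h
  have h0 : ∀ᵐ ξ : EuclideanSpace ℝ (Fin 3),
      0 ≤ (a * ‖ξ‖⁻¹ + 1) * ((‖Ξ - ξ‖ ^ 2 + ‖ξ‖ + a) ^ 2)⁻¹ := by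
    refine Eventually.of_forall fun ξ => mul_nonneg ?_ (inv_nonneg.2 (sq_nonneg _))
    have : 0 ≤ a * ‖ξ‖⁻¹ := mul_nonneg ha0.le (inv_nonneg.2 (norm_nonneg _))
    linarith
  have hmono := integral_mono_of_nonneg h0 hsum hae
  rw [integral_add hgint hΞint,
    integral_sub_left_eq_self (fun x : EuclideanSpace ℝ (Fin 3) => myG a ‖x‖) volume Ξ] at hmono
  have hrpow : (1:ℝ) ≤ a ^ ε := Real.one_le_rpow ha hε.le
  have hfin : (15 * V : ℝ) ≤ (15 * V + 1) * a ^ ε := by nlinarith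
  calc (∫ ξ : EuclideanSpace ℝ (Fin 3),
          (a * ‖ξ‖⁻¹ + 1) * ((‖Ξ - ξ‖ ^ 2 + ‖ξ‖ + a) ^ 2)⁻¹)
      ≤ (∫ x : EuclideanSpace ℝ (Fin 3), myG a ‖x‖)
        + ∫ x : EuclideanSpace ℝ (Fin 3), myG a ‖x‖ := hmono
    _ ≤ 15 * V := by linarith
    _ ≤ (15 * V + 1) * a ^ ε := hfin
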